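/- Let H be a continuous piecewise linear function in 𝓗_p (slopes ±p, starting from 0 with slope +p, returning to 0 and stopped there, all local minima between consecutive zeros at distinct heights). Then the exploration bijection Φ_p, which associates to H the rooted binary tree obtained by reading local maxima as death times and local minima as birth times (splitting the excursion above each lowest local minimum into a left part for the parent and a right part for the child), is a bijection between 𝓗_p (modulo the horizontal spacing of branches) and the set 𝓣 of finite rooted binary chronological trees. -/

import Mathlib

/-!  STATEMENT 19: the bijection `Φ_p` between `𝓗_p` (exploration excursions, modulo the
horizontal spacing of branches) and the set `𝓣` of finite rooted binary chronological trees.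

An element of `𝓗_p` modulo horizontal spacing is determined by the alternating sequence of
heights of its local maxima `M_1, …, M_n` and interior local minima `m_1, …, m_{n-1}`
(slopes `±p`, starting upward from `0` and returning to `0`, all local minima at distinct
heights).  We record it, relative to a base level `h` (`h = 0` for `𝓗_p` itself), as the
pair of lists of these heights.

A finite rooted binary chronological tree is recorded through the binary-splitting
representation used in the exploration: it is either a single lifetime segment ending at a
death height, or it splits at the (lowest) birth height `t` into a left part (the parent and
its later progeny) and a right part (the first offspring and its progeny), both living above
level `t`; births occur one at a time, i.e. all split heights are distinct. -/

/-- An excursion of `𝓗_p` above a base level, modulo horizontal spacing: the list of heights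
of its local maxima and the list of heights of its interior local minima. -/
structure Exc where
  maxima : List ℝ
  minima : List ℝ

/-- `e` is a valid excursion above the level `h`: there is at least one local maximum, one
fewer interior local minima than maxima, everything happens strictly above `h`, each interior
local minimum is below its two neighbouring local maxima, and all local minima are at
distinct heights. -/
def ValidExc (h : ℝ) (e : Exc) : Prop :=
  e.maxima ≠ [] ∧
  e.minima.length + 1 = e.maxima.length ∧
  (∀ x ∈ e.maxima, h < x) ∧
  (∀ i < e.minima.length,
      h < e.minima.getD i 0 ∧
      e.minima.getD i 0 < e.maxima.getD i 0 ∧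
      e.minima.getD i 0 < e.maxima.getD (i + 1) 0) ∧
  e.minima.Nodup

/-- Binary chronological trees in splitting representation: a lifetime segment ending at a
death height, or a split at a birth height into left (parent) and right (first offspring)
subtrees. -/
inductive BinTree : Type
  | leaf (death : ℝ) : BinTree
  | node (birth : ℝ) (left right : BinTree) : BinTree

/-- The list of split (birth) heights of a tree. -/
def BinTree.splits : BinTree → List ℝ
  | .leaf _ => []
  | .node t l r => t :: (l.splits ++ r.splits)

/-- The tree `τ` is a valid chronological tree above level `h`: deaths and births happen
strictly above the level at which the corresponding individual is alive. -/
def ValidShape : ℝ → BinTree → Prop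
  | h, .leaf d => h < d
  | h, .node t l r => h < t ∧ ValidShape t l ∧ ValidShape t r

/-- A valid binary chronological tree above level `h`: valid shape, and births occur one at a
time (all split heights distinct). -/
def ValidTree (h : ℝ) (τ : BinTree) : Prop :=
  ValidShape h τ ∧ τ.splits.Nodup

namespace Explore

/-- Alternating chain of maxima/minima above level `h`. -/
inductive AltChain : ℝ → List ℝ → List ℝ → Prop
  | single {h M : ℝ} : h < M → AltChain h [M] []
  | cons {h M m : ℝ} {Ms ms : List ℝ} : h < M → h < m → m < M → m < Ms.headD 0 →
      AltChain h Ms ms → AltChain h (M :: Ms) (m :: ms)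

lemma AltChain.maxima_ne_nil {h : ℝ} {M m : List ℝ} (hc : AltChain h M m) : M ≠ [] := by
  cases hc <;> simp

lemma AltChain.length_eq {h : ℝ} {M m : List ℝ} (hc : AltChain h M m) :
    m.length + 1 = M.length := by
  induction hc <;> simp_all

lemma AltChain.head_lt {h : ℝ} {M m : List ℝ} (hc : AltChain h M m) : h < M.headD 0 := by
  cases hc <;> simpa

lemma AltChain.cons_inv {h M m : ℝ} {Ms ms : List ℝ} (hc : AltChain h (M :: Ms) (m :: ms)) :
    h < M ∧ h < m ∧ m < M ∧ m < Ms.headD 0 ∧ AltChain h Ms ms := by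
  cases hc
  exact ⟨‹_›, ‹_›, ‹_›, ‹_›, ‹_›⟩

lemma AltChain.mem_max {h : ℝ} {M m : List ℝ} (hc : AltChain h M m) :
    ∀ x ∈ M, h < x := by
  induction hc with
  | single hM => simpa
  | cons h1 h2 h3 h4 h5 ih =>
      intro x hx
      rcases List.mem_cons.mp hx with rfl | hx
      · exact h1
      · exact ih x hx

lemma AltChain.mem_min {h : ℝ} {M m : List ℝ} (hc : AltChain h M m) :
    ∀ x ∈ m, h < x := by
  induction hc with
  | single hM => simp
  | cons h1 h2 h3 h4 h5 ih =>
      intro x hx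
      rcases List.mem_cons.mp hx with rfl | hx
      · exact h2
      · exact ih x hx

lemma AltChain.relevel {h t : ℝ} {M m : List ℝ} (hc : AltChain h M m)
    (hhead : t < M.headD 0) (hmem : ∀ x ∈ m, t < x) : AltChain t M m := by
  induction hc with
  | single hM => exact .single (by simpa using hhead)
  | cons h1 h2 h3 h4 h5 ih =>
      refine .cons (by simpa using hhead) (hmem _ (by simp)) h3 h4 (ih ?_ ?_)
      · exact lt_trans (hmem _ (by simp)) h4
      · intro x hx; exact hmem x (by simp [hx])

lemma AltChain.weaken {h h' : ℝ} {M m : List ℝ} (hle : h' ≤ h) (hc : AltChain h M m) :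
    AltChain h' M m := by
  induction hc with
  | single hM => exact .single (lt_of_le_of_lt hle hM)
  | cons h1 h2 h3 h4 h5 ih =>
      exact .cons (lt_of_le_of_lt hle h1) (lt_of_le_of_lt hle h2) h3 h4 ih

lemma AltChain.append {h t : ℝ} {Ml ml Mr mr : List ℝ} (hht : h < t)
    (hl : AltChain t Ml ml) (hr : AltChain t Mr mr) :
    AltChain h (Ml ++ Mr) (ml ++ t :: mr) := by
  induction hl with
  | single hM =>
      exact .cons (lt_trans hht hM) hht hM hr.head_lt (hr.weaken (le_of_lt hht))
  | @cons M m Ms ms h1 h2 h3 h4 h5 ih =>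
      refine .cons (lt_trans hht h1) (lt_trans hht h2) h3 ?_ ih
      have hMs : Ms ≠ [] := h5.maxima_ne_nil
      cases Ms with
      | nil => simp at hMs
      | cons a l => simpa using h4

lemma AltChain.split {h t : ℝ} {Ml ml Mr mr : List ℝ}
    (hc : AltChain h (Ml ++ Mr) (ml ++ t :: mr))
    (hlen : Ml.length = ml.length + 1)
    (hml : ∀ x ∈ ml, t < x) (hmr : ∀ x ∈ mr, t < x) :
    h < t ∧ AltChain t Ml ml ∧ AltChain t Mr mr := by
  induction ml generalizing Ml with
  | nil =>
      obtain ⟨M, rfl⟩ : ∃ M, Ml = [M] := by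
        cases Ml with
        | nil => simp at hlen
        | cons a l =>
            cases l with
            | nil => exact ⟨a, rfl⟩
            | cons b l' => simp at hlen
      simp only [List.cons_append, List.nil_append] at hc
      obtain ⟨h1, h2, h3, h4, h5⟩ := hc.cons_inv
      exact ⟨h2, .single h3, h5.relevel h4 hmr⟩
  | cons m0 ml' ih =>
      obtain ⟨M, Ml', rfl⟩ : ∃ M Ml'', Ml = M :: Ml'' := by
        cases Ml with
        | nil => simp at hlen
        | cons a l => exact ⟨a, l, rfl⟩
      have hlen' : Ml'.length = ml'.length + 1 := by simpa using hlen
      simp only [List.cons_append] at hc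
      obtain ⟨h1, h2, h3, h4, h5⟩ := hc.cons_inv
      obtain ⟨hht, hcl, hcr⟩ := ih h5 hlen' (fun x hx => hml x (by simp [hx]))
      have hMl' : Ml' ≠ [] := hcl.maxima_ne_nil
      have hm0 : t < m0 := hml m0 (by simp)
      refine ⟨hht, .cons (lt_trans hm0 h3) hm0 h3 ?_ hcl, hcr⟩
      cases Ml' with
      | nil => simp at hMl'
      | cons a l => simpa using h4

lemma getD_zero_headD (l : List ℝ) : l.getD 0 0 = l.headD 0 := by
  cases l <;> simp

lemma toAlt {h : ℝ} : ∀ (m M : List ℝ), M ≠ [] → m.length + 1 = M.length →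
    (∀ x ∈ M, h < x) →
    (∀ i < m.length, h < m.getD i 0 ∧ m.getD i 0 < M.getD i 0 ∧ m.getD i 0 < M.getD (i + 1) 0) →
    AltChain h M m := by
  intro m
  induction m with
  | nil =>
      intro M hne hlen hmax _
      obtain ⟨M0, rfl⟩ : ∃ M0, M = [M0] := by
        cases M with
        | nil => simp at hlen
        | cons a l =>
            cases l with
            | nil => exact ⟨a, rfl⟩
            | cons b l' => simp at hlen
      exact .single (hmax _ (by simp))
  | cons m0 ms ih =>
      intro M hne hlen hmax hmin
      obtain ⟨M0, Ms, rfl⟩ : ∃ M0 Ms, M = M0 :: Ms := by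
        cases M with
        | nil => simp at hlen
        | cons a l => exact ⟨a, l, rfl⟩
      have h0 := hmin 0 (by simp)
      simp only [List.getD_cons_zero, List.getD_cons_succ] at h0
      have hMs : Ms ≠ [] := by
        intro hh; rw [hh] at hlen; simp at hlen
      refine .cons (hmax _ (by simp)) h0.1 h0.2.1 ?_ ?_
      · rw [← getD_zero_headD]; exact h0.2.2
      · refine ih Ms hMs (by simpa using hlen) (fun x hx => hmax x (by simp [hx])) ?_
        intro i hi
        have := hmin (i + 1) (by simpa using hi)
        simpa using this

lemma ofAlt {h : ℝ} {M m : List ℝ} (hc : AltChain h M m) :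
    ∀ i < m.length, h < m.getD i 0 ∧ m.getD i 0 < M.getD i 0 ∧
      m.getD i 0 < M.getD (i + 1) 0 := by
  induction hc with
  | single hM => simp
  | @cons M0 m0 Ms ms h1 h2 h3 h4 h5 ih =>
      intro i hi
      cases i with
      | zero =>
          refine ⟨by simpa using h2, by simpa using h3, ?_⟩
          simp only [List.getD_cons_succ, List.getD_cons_zero, getD_zero_headD]
          exact h4
      | succ j =>
          have := ih j (by simpa using hi)
          simpa using this

lemma validExc_iff {h : ℝ} {e : Exc} :
    ValidExc h e ↔ AltChain h e.maxima e.minima ∧ e.minima.Nodup := by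
  constructor
  · rintro ⟨hne, hlen, hmax, hmin, hnd⟩
    exact ⟨toAlt _ _ hne hlen hmax hmin, hnd⟩
  · rintro ⟨hc, hnd⟩
    exact ⟨hc.maxima_ne_nil, hc.length_eq, hc.mem_max, ofAlt hc, hnd⟩

/-- Flattening a tree back into an excursion. -/
def flat : BinTree → Exc
  | .leaf d => ⟨[d], []⟩
  | .node t l r => ⟨(flat l).maxima ++ (flat r).maxima, (flat l).minima ++ t :: (flat r).minima⟩

lemma flat_minima_perm (τ : BinTree) : (flat τ).minima.Perm τ.splits := by
  induction τ with
  | leaf d => simp [flat, BinTree.splits]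
  | node t l r ihl ihr =>
      simp only [flat, BinTree.splits]
      exact List.perm_middle.trans (List.Perm.cons t (ihl.append ihr))

lemma flat_len (τ : BinTree) : (flat τ).minima.length + 1 = (flat τ).maxima.length := by
  induction τ with
  | leaf d => simp [flat]
  | node t l r ihl ihr => simp [flat]; omega

lemma flat_alt {h : ℝ} {τ : BinTree} (hv : ValidShape h τ) :
    AltChain h (flat τ).maxima (flat τ).minima := by
  induction τ generalizing h with
  | leaf d => exact .single hv
  | node t l r ihl ihr =>
      obtain ⟨h1, h2, h3⟩ := hv
      exact AltChain.append h1 (ihl h2) (ihr h3)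

lemma splits_lt {h : ℝ} {τ : BinTree} (hv : ValidShape h τ) :
    ∀ x ∈ τ.splits, h < x := by
  induction τ generalizing h with
  | leaf d => simp [BinTree.splits]
  | node t l r ihl ihr =>
      obtain ⟨h1, h2, h3⟩ := hv
      intro x hx
      simp only [BinTree.splits, List.mem_cons, List.mem_append] at hx
      rcases hx with rfl | hx | hx
      · exact h1
      · exact lt_trans h1 (ihl h2 x hx)
      · exact lt_trans h1 (ihr h3 x hx)

lemma min?_spec {l : List ℝ} {m : ℝ} (h : l.min? = some m) : m ∈ l ∧ ∀ x ∈ l, m ≤ x :=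
  List.min?_eq_some_iff.mp h

lemma min?_of_spec {l : List ℝ} {m : ℝ} (hm : m ∈ l) (hle : ∀ x ∈ l, m ≤ x) :
    l.min? = some m :=
  List.min?_eq_some_iff.mpr ⟨hm, hle⟩

/-- The exploration map. -/
noncomputable def Phi (e : Exc) : BinTree :=
  match hm : e.minima.min? with
  | none => .leaf (e.maxima.headD 0)
  | some m =>
    .node m (Phi ⟨e.maxima.take (e.minima.idxOf m + 1), e.minima.take (e.minima.idxOf m)⟩)
            (Phi ⟨e.maxima.drop (e.minima.idxOf m + 1), e.minima.drop (e.minima.idxOf m + 1)⟩)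
termination_by e.minima.length
decreasing_by
  all_goals
    have hi : e.minima.idxOf m < e.minima.length :=
      List.idxOf_lt_length_iff.mpr (min?_spec hm).1
  · simp only [List.length_take]; omega
  · simp only [List.length_drop]; omega

lemma Phi_nil {e : Exc} (h : e.minima = []) : Phi e = .leaf (e.maxima.headD 0) := by
  rw [Phi]
  split
  · rfl
  · rename_i m hm
    rw [h] at hm
    simp at hm

lemma Phi_cons {e : Exc} {m : ℝ} (hm : e.minima.min? = some m) :
    Phi e = .node m
      (Phi ⟨e.maxima.take (e.minima.idxOf m + 1), e.minima.take (e.minima.idxOf m)⟩)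
      (Phi ⟨e.maxima.drop (e.minima.idxOf m + 1), e.minima.drop (e.minima.idxOf m + 1)⟩) := by
  rw [Phi]
  split
  · rename_i hn; rw [hn] at hm; simp at hm
  · rename_i m' hm'
    rw [hm'] at hm
    cases hm
    rfl

end Explore

namespace Explore

lemma phi_main_nil {h : ℝ} {e : Exc} (hv : ValidExc h e) (hnil : e.minima = []) :
    ValidTree h (Phi e) ∧ (Phi e).splits.Perm e.minima ∧ flat (Phi e) = e := by
  obtain ⟨hne, hlen, hmax, _, _⟩ := hv
  rw [hnil] at hlen
  obtain ⟨M0, hM⟩ : ∃ M0, e.maxima = [M0] := by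
    cases hM : e.maxima with
    | nil => exact absurd hM hne
    | cons a l =>
        rw [hM] at hlen
        cases l with
        | nil => exact ⟨a, rfl⟩
        | cons b l' => simp at hlen
  rw [Phi_nil hnil, hM]
  refine ⟨⟨?_, by simp [BinTree.splits]⟩, by simp [BinTree.splits, hnil], ?_⟩
  · show h < [M0].headD 0
    simpa using hmax M0 (by simp [hM])
  · obtain ⟨Ma, mi⟩ := e
    simp only at hM hnil
    simp [flat, hM, hnil]

lemma phi_main (n : ℕ) : ∀ (e : Exc) (h : ℝ), e.minima.length ≤ n → ValidExc h e →
    ValidTree h (Phi e) ∧ (Phi e).splits.Perm e.minima ∧ flat (Phi e) = e := by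
  induction n with
  | zero =>
      intro e h hlen hv
      exact phi_main_nil hv (List.length_eq_zero_iff.mp (Nat.le_zero.mp hlen))
  | succ n ih =>
      intro e h hlen hv
      by_cases hnil : e.minima = []
      · exact phi_main_nil hv hnil
      obtain ⟨mv, hm⟩ : ∃ mv, e.minima.min? = some mv := by
        cases hn : e.minima.min? with
        | none => exact absurd (List.min?_eq_none_iff.mp hn) hnil
        | some m => exact ⟨m, rfl⟩
      obtain ⟨hmem, hmin⟩ := min?_spec hm
      set i := e.minima.idxOf mv with hidef
      have hi : i < e.minima.length := List.idxOf_lt_length_iff.mpr hmem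
      have hgi : e.minima[i] = mv := List.getElem_idxOf hi
      obtain ⟨hc, hnd⟩ := validExc_iff.mp hv
      have hsplitm : e.minima = e.minima.take i ++ mv :: e.minima.drop (i + 1) := by
        conv_lhs => rw [← List.take_append_drop i e.minima]
        rw [List.drop_eq_getElem_cons hi, hgi]
      have hsplitM : e.maxima = e.maxima.take (i + 1) ++ e.maxima.drop (i + 1) :=
        (List.take_append_drop _ _).symm
      have hlenM : e.minima.length + 1 = e.maxima.length := hc.length_eq
      have htakeM : (e.maxima.take (i + 1)).length = (e.minima.take i).length + 1 := by
        simp only [List.length_take]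
        omega
      have hml : ∀ x ∈ e.minima.take i, mv < x := by
        intro x hx
        rcases lt_or_eq_of_le (hmin x (List.mem_of_mem_take hx)) with hlt | heq
        · exact hlt
        exfalso
        have hx' : mv ∈ e.minima.take i := heq ▸ hx
        have h1 : i = List.idxOf mv (e.minima.take i ++ e.minima.drop i) := by
          rw [List.take_append_drop]
        rw [List.idxOf_append_of_mem hx'] at h1
        have h2 : List.idxOf mv (e.minima.take i) < (e.minima.take i).length :=
          List.idxOf_lt_length_iff.mpr hx'
        simp only [List.length_take] at h2
        omega
      have hmr : ∀ x ∈ e.minima.drop (i + 1), mv < x := by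
        intro x hx
        rcases lt_or_eq_of_le (hmin x (List.mem_of_mem_drop hx)) with hlt | heq
        · exact hlt
        exfalso
        have hx' : mv ∈ e.minima.drop (i + 1) := heq ▸ hx
        obtain ⟨j, hj, hjx⟩ := List.mem_iff_getElem.mp hx'
        rw [List.getElem_drop] at hjx
        have hj' : i + 1 + j < e.minima.length := by
          simp only [List.length_drop] at hj; omega
        have : i + 1 + j = i := hnd.getElem_inj_iff.mp (hjx.trans hgi.symm)
        omega
      have hc' : AltChain h (e.maxima.take (i + 1) ++ e.maxima.drop (i + 1))
          (e.minima.take i ++ mv :: e.minima.drop (i + 1)) := by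
        rw [← hsplitM, ← hsplitm]; exact hc
      obtain ⟨hhtm, hcl, hcr⟩ := hc'.split htakeM hml hmr
      have hvl : ValidExc mv ⟨e.maxima.take (i + 1), e.minima.take i⟩ :=
        validExc_iff.mpr ⟨hcl, (List.take_sublist _ _).nodup hnd⟩
      have hvr : ValidExc mv ⟨e.maxima.drop (i + 1), e.minima.drop (i + 1)⟩ :=
        validExc_iff.mpr ⟨hcr, (List.drop_sublist _ _).nodup hnd⟩
      obtain ⟨hTl, hPl, hFl⟩ := ih _ mv (by simp only [List.length_take]; omega) hvl
      obtain ⟨hTr, hPr, hFr⟩ := ih _ mv (by simp only [List.length_drop]; omega) hvr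
      rw [Phi_cons hm]
      have hperm : (BinTree.node mv
          (Phi ⟨e.maxima.take (i + 1), e.minima.take i⟩)
          (Phi ⟨e.maxima.drop (i + 1), e.minima.drop (i + 1)⟩)).splits.Perm e.minima := by
        show (mv :: (_ ++ _)).Perm e.minima
        refine ((List.Perm.cons mv (hPl.append hPr)).trans ?_)
        refine List.perm_middle.symm.trans ?_
        rw [← hsplitm]
      refine ⟨⟨⟨hhtm, hTl.1, hTr.1⟩, hperm.symm.nodup hnd⟩, hperm, ?_⟩
      show flat (.node mv _ _) = e
      simp only [flat, ← hidef, hFl, hFr]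
      rw [← hsplitM, ← hsplitm]

end Explore

namespace Explore

lemma phi_flat {h : ℝ} {τ : BinTree} (hs : ValidShape h τ) (hnd : τ.splits.Nodup) :
    Phi (flat τ) = τ := by
  induction τ generalizing h with
  | leaf d =>
      rw [Phi_nil (by simp [flat])]
      simp [flat]
  | node t l r ihl ihr =>
      obtain ⟨h1, h2, h3⟩ := hs
      have hnd' := hnd
      simp only [BinTree.splits, List.nodup_cons, List.nodup_append, List.mem_append] at hnd'
      obtain ⟨htni, hndl, hndr, hdisj⟩ := hnd'
      have hlm : ∀ x ∈ (flat l).minima, t < x := fun x hx =>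
        splits_lt h2 x ((flat_minima_perm l).subset hx)
      have hrm : ∀ x ∈ (flat r).minima, t < x := fun x hx =>
        splits_lt h3 x ((flat_minima_perm r).subset hx)
      have hmins : (flat (.node t l r)).minima
          = (flat l).minima ++ t :: (flat r).minima := rfl
      have hmaxs : (flat (.node t l r)).maxima
          = (flat l).maxima ++ (flat r).maxima := rfl
      have hm : (flat (.node t l r)).minima.min? = some t := by
        rw [hmins]
        refine min?_of_spec (by simp) ?_
        intro x hx
        simp only [List.mem_append, List.mem_cons] at hx
        rcases hx with hx | rfl | hx
        · exact le_of_lt (hlm x hx)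
        · exact le_refl _
        · exact le_of_lt (hrm x hx)
      have htnotl : t ∉ (flat l).minima := fun hx => absurd rfl (ne_of_gt (hlm t hx))
      have hidx : (flat (.node t l r)).minima.idxOf t = (flat l).minima.length := by
        rw [hmins, List.idxOf_append_of_notMem htnotl, List.idxOf_cons_self]
        omega
      have hlenl := flat_len l
      rw [Phi_cons hm, hidx]
      have e1 : ((flat l).maxima ++ (flat r).maxima).take ((flat l).minima.length + 1)
          = (flat l).maxima := by
        rw [hlenl]; exact List.take_left
      have e2 : ((flat l).minima ++ t :: (flat r).minima).take (flat l).minima.length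
          = (flat l).minima := List.take_left
      have e3 : ((flat l).maxima ++ (flat r).maxima).drop ((flat l).minima.length + 1)
          = (flat r).maxima := by
        rw [hlenl]; exact List.drop_left
      have e4 : ((flat l).minima ++ t :: (flat r).minima).drop ((flat l).minima.length + 1)
          = (flat r).minima := by
        have : (flat l).minima ++ t :: (flat r).minima
            = ((flat l).minima ++ [t]) ++ (flat r).minima := by simp
        rw [this]
        have hlen : ((flat l).minima ++ [t]).length = (flat l).minima.length + 1 := by simp
        rw [← hlen]
        exact List.drop_left
      rw [hmaxs, hmins, e1, e2, e3, e4]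
      have : (⟨(flat l).maxima, (flat l).minima⟩ : Exc) = flat l := rfl
      rw [this]
      have : (⟨(flat r).maxima, (flat r).minima⟩ : Exc) = flat r := rfl
      rw [this, ihl h2 hndl, ihr h3 hndr]

end Explore


/-- there is a map `Φ` which, for every base level `h`, is a bijection from the
excursions of `𝓗_p` above `h` (modulo horizontal spacing) onto the binary chronological
trees above `h`, and which is given by the exploration procedure: if the excursion has no
interior local minimum, the tree is a single individual dying at the unique local maximum
height; otherwise, the lowest local minimum `m` is the first birth height, the part of the
excursion left of it (viewed above level `m`) codes the parent and the rest of its progeny,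
and the part right of it codes the first offspring and its progeny.  In particular (`h = 0`)
`Φ_p` is a bijection between `𝓗_p` modulo horizontal spacing and `𝓣`. -/
theorem exploration_bijection :
    ∃ Φ : ℝ → Exc → BinTree,
      (∀ h : ℝ, Set.BijOn (Φ h) {e | ValidExc h e} {τ | ValidTree h τ}) ∧
      (∀ h : ℝ, ∀ e : Exc, ValidExc h e →
        (e.minima = [] → Φ h e = BinTree.leaf (e.maxima.headD 0)) ∧
        (∀ i < e.minima.length,
          (∀ x ∈ e.minima, e.minima.getD i 0 ≤ x) →
          Φ h e = BinTree.node (e.minima.getD i 0)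
            (Φ (e.minima.getD i 0) ⟨e.maxima.take (i + 1), e.minima.take i⟩)
            (Φ (e.minima.getD i 0) ⟨e.maxima.drop (i + 1), e.minima.drop (i + 1)⟩))) := by
  refine ⟨fun _ e => Explore.Phi e, ?_, ?_⟩
  · intro h
    refine ⟨?_, ?_, ?_⟩
    · intro e he
      exact (Explore.phi_main e.minima.length e h le_rfl he).1
    · intro e1 h1 e2 h2 heq
      have f1 := (Explore.phi_main _ e1 h le_rfl h1).2.2
      have f2 := (Explore.phi_main _ e2 h le_rfl h2).2.2
      rw [← f1, ← f2]
      simp only [heq]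
    · intro τ hτ
      refine ⟨Explore.flat τ, ?_, Explore.phi_flat hτ.1 hτ.2⟩
      exact Explore.validExc_iff.mpr
        ⟨Explore.flat_alt hτ.1, (Explore.flat_minima_perm τ).symm.nodup hτ.2⟩
  · intro h e hv
    constructor
    · intro hnil
      exact Explore.Phi_nil hnil
    · intro i hi hminimal
      have hnd := hv.2.2.2.2
      have hgi : e.minima.getD i 0 = e.minima[i] := List.getD_eq_getElem _ _ hi
      have hm : e.minima.min? = some (e.minima.getD i 0) := by
        refine Explore.min?_of_spec ?_ hminimal
        rw [hgi]
        exact List.getElem_mem _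
      have hidx : e.minima.idxOf (e.minima.getD i 0) = i := by
        rw [hgi]
        exact List.Nodup.idxOf_getElem hnd i hi
      show Explore.Phi e = BinTree.node _ (Explore.Phi _) (Explore.Phi _)
      rw [Explore.Phi_cons hm, hidx]
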